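/- Let V, U, X, Y, Z be jointly distributed finite random variables such that (i) the joint law factorizes as p(v,u)·p(x|u)·p(y,z|x) (i.e., V–U–X–(Y,Z) is a Markov chain), (ii) Y = f(X) for some deterministic function f, and (iii) X = g(Y, U) for some deterministic function g. Then I(V; Y) + H(Y | U) + I(U; Z | V) ≤ I(X; Y, Z). -/

import Mathlib

open Finset
open scoped Classical

noncomputable section

/-- Probability that the random variable `X` takes the value `a`, under the
probability mass function `μ` on the finite sample space `Ω`. -/
def pr {Ω α : Type*} [Fintype Ω] (μ : Ω → ℝ) (X : Ω → α) (a : α) : ℝ :=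
  ∑ ω, if X ω = a then μ ω else 0

/-- `μ` is a probability mass function. -/
def IsPMF {Ω : Type*} [Fintype Ω] (μ : Ω → ℝ) : Prop :=
  (∀ ω, 0 ≤ μ ω) ∧ ∑ ω, μ ω = 1

/-- Shannon entropy (base 2) of a finite random variable. -/
def ent {Ω α : Type*} [Fintype Ω] [Fintype α] (μ : Ω → ℝ) (X : Ω → α) : ℝ :=
  -∑ a, pr μ X a * Real.logb 2 (pr μ X a)

/-- Mutual information `I(X;Y)` (base 2). -/
def mi {Ω α β : Type*} [Fintype Ω] [Fintype α] [Fintype β]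
    (μ : Ω → ℝ) (X : Ω → α) (Y : Ω → β) : ℝ :=
  ent μ X + ent μ Y - ent μ (fun ω => (X ω, Y ω))

/-- Conditional entropy `H(X|Y)` (base 2). -/
def cent {Ω α β : Type*} [Fintype Ω] [Fintype α] [Fintype β]
    (μ : Ω → ℝ) (X : Ω → α) (Y : Ω → β) : ℝ :=
  ent μ (fun ω => (X ω, Y ω)) - ent μ Y

/-- Conditional mutual information `I(X;Y|Z)` (base 2). -/
def cmi {Ω α β γ : Type*} [Fintype Ω] [Fintype α] [Fintype β] [Fintype γ]
    (μ : Ω → ℝ) (X : Ω → α) (Y : Ω → β) (Z : Ω → γ) : ℝ :=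
  ent μ (fun ω => (X ω, Z ω)) + ent μ (fun ω => (Y ω, Z ω))
    - ent μ (fun ω => (X ω, Y ω, Z ω)) - ent μ Z

/-- Independence of two finite random variables. -/
def IndepRV {Ω α β : Type*} [Fintype Ω] (μ : Ω → ℝ) (X : Ω → α) (Y : Ω → β) : Prop :=
  ∀ a b, pr μ (fun ω => (X ω, Y ω)) (a, b) = pr μ X a * pr μ Y b

set_option maxHeartbeats 1000000 in
section
section Basic
variable {Ω α β γ : Type*} [Fintype Ω] (μ : Ω → ℝ)

lemma pr_nonneg (hμ : IsPMF μ) (X : Ω → α) (a : α) : 0 ≤ pr μ X a := by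
  apply Finset.sum_nonneg; intro ω _
  split <;> simp [hμ.1 ω]

lemma sum_pr [Fintype α] (hμ : IsPMF μ) (X : Ω → α) : ∑ a, pr μ X a = 1 := by
  unfold pr
  rw [Finset.sum_comm]
  rw [← hμ.2]
  refine Finset.sum_congr rfl fun ω _ => ?_
  simp

lemma pr_comp [Fintype α] (X : Ω → α) (h : α → β) (b : β) :
    pr μ (fun ω => h (X ω)) b = ∑ a, if h a = b then pr μ X a else 0 := by
  unfold pr
  have key : ∀ a : α, (if h a = b then ∑ ω, (if X ω = a then μ ω else 0) else 0)
      = ∑ ω, (if h a = b ∧ X ω = a then μ ω else 0) := by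
    intro a
    split
    · refine Finset.sum_congr rfl fun ω _ => by simp_all
    · simp_all
  simp only [key]
  rw [Finset.sum_comm]
  refine Finset.sum_congr rfl fun ω _ => ?_
  rw [Finset.sum_eq_single (X ω)]
  · simp
  · intro a _ ha; simp only [ite_eq_right_iff, and_imp]
    intro _ hxa; exact absurd hxa.symm ha
  · simp

lemma pr_comp_eq [Fintype α] (X : Ω → α) {e : α → β} (he : Function.Injective e) (a : α) :
    pr μ (fun ω => e (X ω)) (e a) = pr μ X a := by
  unfold pr
  exact Finset.sum_congr rfl fun ω _ => by simp [he.eq_iff]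

lemma pr_comp_ne [Fintype α] (X : Ω → α) {e : α → β} {b : β} (hb : ∀ a, e a ≠ b) :
    pr μ (fun ω => e (X ω)) b = 0 := by
  unfold pr
  exact Finset.sum_eq_zero fun ω _ => by simp [hb (X ω)]

lemma ent_comp [Fintype α] [Fintype β] (X : Ω → α) {e : α → β}
    (he : Function.Injective e) :
    ent μ (fun ω => e (X ω)) = ent μ X := by
  unfold ent
  congr 1
  rw [← Finset.sum_subset (Finset.subset_univ (Finset.univ.image e))]
  · rw [Finset.sum_image (fun a _ a' _ h => he h)]
    exact Finset.sum_congr rfl fun a _ => by rw [pr_comp_eq μ X he]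
  · intro b _ hb
    have hz : pr μ (fun ω => e (X ω)) b = 0 := by
      refine pr_comp_ne μ X fun a h => hb ?_
      exact Finset.mem_image.2 ⟨a, Finset.mem_univ a, h⟩
    simp [hz]

end Basic

set_option linter.unusedSectionVars false
section CMI
variable {Ω α β γ : Type*} [Fintype Ω] [Fintype α] [Fintype β] [Fintype γ]
variable (μ : Ω → ℝ) (A : Ω → α) (B : Ω → β) (C : Ω → γ)

lemma marg_AC (a : α) (c : γ) :
    pr μ (fun ω => (A ω, C ω)) (a, c)
      = ∑ b, pr μ (fun ω => (A ω, B ω, C ω)) (a, b, c) := by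
  unfold pr
  rw [Finset.sum_comm]
  refine Finset.sum_congr rfl fun ω _ => ?_
  rw [Finset.sum_eq_single (B ω)]
  · simp [Prod.ext_iff]
  · intro b _ hb
    simp only [ite_eq_right_iff, Prod.mk.injEq, and_imp]
    intro _ hb' _; exact absurd hb'.symm hb
  · simp

lemma marg_BC (b : β) (c : γ) :
    pr μ (fun ω => (B ω, C ω)) (b, c)
      = ∑ a, pr μ (fun ω => (A ω, B ω, C ω)) (a, b, c) := by
  unfold pr
  rw [Finset.sum_comm]
  refine Finset.sum_congr rfl fun ω _ => ?_
  rw [Finset.sum_eq_single (A ω)]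
  · simp [Prod.ext_iff]
  · intro a _ ha
    simp only [ite_eq_right_iff, Prod.mk.injEq, and_imp]
    intro ha' _ _; exact absurd ha'.symm ha
  · simp

lemma marg_C_left (c : γ) :
    pr μ C c = ∑ a, pr μ (fun ω => (A ω, C ω)) (a, c) := by
  unfold pr
  rw [Finset.sum_comm]
  refine Finset.sum_congr rfl fun ω _ => ?_
  rw [Finset.sum_eq_single (A ω)]
  · simp [Prod.ext_iff]
  · intro a _ ha
    simp only [ite_eq_right_iff, Prod.mk.injEq, and_imp]
    intro ha' _; exact absurd ha'.symm ha
  · simp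

lemma ent_pair_sum3_left :
    ent μ (fun ω => (A ω, C ω))
      = -∑ a, ∑ b, ∑ c, pr μ (fun ω => (A ω, B ω, C ω)) (a, b, c)
          * Real.logb 2 (pr μ (fun ω => (A ω, C ω)) (a, c)) := by
  unfold ent
  rw [Fintype.sum_prod_type]
  congr 1
  refine Finset.sum_congr rfl fun a _ => ?_
  rw [Finset.sum_comm]
  refine Finset.sum_congr rfl fun c _ => ?_
  rw [marg_AC μ A B C a c, Finset.sum_mul]

lemma ent_pair_sum3_mid :
    ent μ (fun ω => (B ω, C ω))
      = -∑ a, ∑ b, ∑ c, pr μ (fun ω => (A ω, B ω, C ω)) (a, b, c)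
          * Real.logb 2 (pr μ (fun ω => (B ω, C ω)) (b, c)) := by
  unfold ent
  rw [Fintype.sum_prod_type]
  congr 1
  have h1 : ∀ b, ∑ c, pr μ (fun ω => (B ω, C ω)) (b, c)
        * Real.logb 2 (pr μ (fun ω => (B ω, C ω)) (b, c))
      = ∑ a, ∑ c, pr μ (fun ω => (A ω, B ω, C ω)) (a, b, c)
        * Real.logb 2 (pr μ (fun ω => (B ω, C ω)) (b, c)) := by
    intro b
    rw [Finset.sum_comm]
    exact Finset.sum_congr rfl fun c _ => by rw [marg_BC μ A B C b c, Finset.sum_mul]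
  simp only [h1]
  rw [Finset.sum_comm]

lemma ent_C_sum3 :
    ent μ C
      = -∑ a, ∑ b, ∑ c, pr μ (fun ω => (A ω, B ω, C ω)) (a, b, c)
          * Real.logb 2 (pr μ C c) := by
  unfold ent
  congr 1
  have h1 : ∀ c, pr μ C c * Real.logb 2 (pr μ C c)
      = ∑ a, ∑ b, pr μ (fun ω => (A ω, B ω, C ω)) (a, b, c)
        * Real.logb 2 (pr μ C c) := by
    intro c
    rw [marg_C_left μ A C c, Finset.sum_mul]
    exact Finset.sum_congr rfl fun a _ => by rw [marg_AC μ A B C a c, Finset.sum_mul]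
  simp only [h1]
  rw [Finset.sum_comm]
  exact Finset.sum_congr rfl fun a _ => Finset.sum_comm

lemma ent_ABC_sum3 :
    ent μ (fun ω => (A ω, B ω, C ω))
      = -∑ a, ∑ b, ∑ c, pr μ (fun ω => (A ω, B ω, C ω)) (a, b, c)
          * Real.logb 2 (pr μ (fun ω => (A ω, B ω, C ω)) (a, b, c)) := by
  unfold ent
  rw [Fintype.sum_prod_type]
  congr 1
  refine Finset.sum_congr rfl fun a _ => ?_
  rw [Fintype.sum_prod_type]


lemma cmi_eq3 :
    cmi μ A B C = ∑ a, ∑ b, ∑ c,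
      pr μ (fun ω => (A ω, B ω, C ω)) (a, b, c) *
        (Real.logb 2 (pr μ (fun ω => (A ω, B ω, C ω)) (a, b, c))
         + Real.logb 2 (pr μ C c)
         - Real.logb 2 (pr μ (fun ω => (A ω, C ω)) (a, c))
         - Real.logb 2 (pr μ (fun ω => (B ω, C ω)) (b, c))) := by
  unfold cmi
  rw [ent_pair_sum3_left μ A B C, ent_pair_sum3_mid μ A B C,
      ent_ABC_sum3 μ A B C, ent_C_sum3 μ A B C]
  simp only [mul_add, mul_sub, Finset.sum_add_distrib, Finset.sum_sub_distrib]
  ring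

lemma cmi_eq_zero (hμ : IsPMF μ)
    (hci : ∀ a b c, pr μ (fun ω => (A ω, B ω, C ω)) (a, b, c) * pr μ C c
        = pr μ (fun ω => (A ω, C ω)) (a, c) * pr μ (fun ω => (B ω, C ω)) (b, c)) :
    cmi μ A B C = 0 := by
  rw [cmi_eq3]
  refine Finset.sum_eq_zero fun a _ => Finset.sum_eq_zero fun b _ =>
    Finset.sum_eq_zero fun c _ => ?_
  rcases eq_or_lt_of_le (pr_nonneg μ hμ (fun ω => (A ω, B ω, C ω)) (a, b, c)) with h0 | hpos
  · rw [← h0, zero_mul]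
  · have hAC : 0 < pr μ (fun ω => (A ω, C ω)) (a, c) := by
      rw [marg_AC μ A B C a c]
      exact lt_of_lt_of_le hpos (Finset.single_le_sum
        (f := fun b' => pr μ (fun ω => (A ω, B ω, C ω)) (a, b', c))
        (fun b' _ => pr_nonneg μ hμ _ _) (Finset.mem_univ b))
    have hBC : 0 < pr μ (fun ω => (B ω, C ω)) (b, c) := by
      rw [marg_BC μ A B C b c]
      exact lt_of_lt_of_le hpos (Finset.single_le_sum
        (f := fun a' => pr μ (fun ω => (A ω, B ω, C ω)) (a', b, c))
        (fun a' _ => pr_nonneg μ hμ _ _) (Finset.mem_univ a))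
    have hC : 0 < pr μ C c := by
      rw [marg_C_left μ A C c]
      exact lt_of_lt_of_le hAC (Finset.single_le_sum
        (f := fun a' => pr μ (fun ω => (A ω, C ω)) (a', c))
        (fun a' _ => pr_nonneg μ hμ _ _) (Finset.mem_univ a))
    have hlog : Real.logb 2 (pr μ (fun ω => (A ω, B ω, C ω)) (a, b, c))
          + Real.logb 2 (pr μ C c)
        = Real.logb 2 (pr μ (fun ω => (A ω, C ω)) (a, c))
          + Real.logb 2 (pr μ (fun ω => (B ω, C ω)) (b, c)) := by
      rw [← Real.logb_mul (ne_of_gt hpos) (ne_of_gt hC),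
          ← Real.logb_mul (ne_of_gt hAC) (ne_of_gt hBC), hci]
    rw [hlog]; ring

lemma cmi_nonneg (hμ : IsPMF μ) : 0 ≤ cmi μ A B C := by
  have hlog2 : (0:ℝ) < Real.log 2 := Real.log_pos one_lt_two
  rw [cmi_eq3]
  set p := fun (a : α) (b : β) (c : γ) => pr μ (fun ω => (A ω, B ω, C ω)) (a, b, c) with hp
  set pac := fun (a : α) (c : γ) => pr μ (fun ω => (A ω, C ω)) (a, c) with hpac
  set pbc := fun (b : β) (c : γ) => pr μ (fun ω => (B ω, C ω)) (b, c) with hpbc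
  set pc := fun (c : γ) => pr μ C c with hpc
  have key : ∀ a b c, (p a b c - pac a c * pbc b c / pc c) / Real.log 2
      ≤ p a b c * (Real.logb 2 (p a b c) + Real.logb 2 (pc c)
          - Real.logb 2 (pac a c) - Real.logb 2 (pbc b c)) := by
    intro a b c
    rcases eq_or_lt_of_le (pr_nonneg μ hμ (fun ω => (A ω, B ω, C ω)) (a, b, c)) with h0 | hpos
    · have hple : p a b c = 0 := h0.symm
      rw [hple, zero_mul, zero_sub]
      apply div_nonpos_of_nonpos_of_nonneg _ (le_of_lt hlog2)
      simp only [neg_nonpos]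
      apply div_nonneg (mul_nonneg (pr_nonneg μ hμ _ _) (pr_nonneg μ hμ _ _))
        (pr_nonneg μ hμ _ _)
    · have hAC : 0 < pac a c := by
        show 0 < pr μ (fun ω => (A ω, C ω)) (a, c)
        rw [marg_AC μ A B C a c]
        exact lt_of_lt_of_le hpos (Finset.single_le_sum
          (f := fun b' => pr μ (fun ω => (A ω, B ω, C ω)) (a, b', c))
          (fun b' _ => pr_nonneg μ hμ _ _) (Finset.mem_univ b))
      have hBC : 0 < pbc b c := by
        show 0 < pr μ (fun ω => (B ω, C ω)) (b, c)
        rw [marg_BC μ A B C b c]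
        exact lt_of_lt_of_le hpos (Finset.single_le_sum
          (f := fun a' => pr μ (fun ω => (A ω, B ω, C ω)) (a', b, c))
          (fun a' _ => pr_nonneg μ hμ _ _) (Finset.mem_univ a))
      have hC : 0 < pc c := by
        show 0 < pr μ C c
        rw [marg_C_left μ A C c]
        exact lt_of_lt_of_le hAC (Finset.single_le_sum
          (f := fun a' => pr μ (fun ω => (A ω, C ω)) (a', c))
          (fun a' _ => pr_nonneg μ hμ _ _) (Finset.mem_univ a))
      have hq : 0 < pac a c * pbc b c / (p a b c * pc c) :=
        div_pos (mul_pos hAC hBC) (mul_pos hpos hC)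
      have hlogle := Real.log_le_sub_one_of_pos hq
      have hlogeq : Real.log (pac a c * pbc b c / (p a b c * pc c))
          = Real.log (pac a c) + Real.log (pbc b c) - Real.log (p a b c) - Real.log (pc c) := by
        rw [Real.log_div (by positivity) (by positivity),
            Real.log_mul (ne_of_gt hAC) (ne_of_gt hBC),
            Real.log_mul (ne_of_gt hpos) (ne_of_gt hC)]
        ring
      have hmul : p a b c * (pac a c * pbc b c / (p a b c * pc c))
          = pac a c * pbc b c / pc c := by
        field_simp
        ring
        exact mul_inv_cancel₀ (ne_of_gt hpos)
      have main : p a b c - pac a c * pbc b c / pc c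
          ≤ p a b c * (Real.log (p a b c) + Real.log (pc c)
              - Real.log (pac a c) - Real.log (pbc b c)) := by
        have h1 : p a b c * Real.log (pac a c * pbc b c / (p a b c * pc c))
            ≤ p a b c * (pac a c * pbc b c / (p a b c * pc c) - 1) :=
          mul_le_mul_of_nonneg_left hlogle (le_of_lt hpos)
        have h2 : p a b c * (pac a c * pbc b c / (p a b c * pc c) - 1)
            = pac a c * pbc b c / pc c - p a b c := by
          rw [mul_sub, mul_one, hmul]
        rw [hlogeq, h2] at h1
        nlinarith [h1]
      calc (p a b c - pac a c * pbc b c / pc c) / Real.log 2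
          ≤ (p a b c * (Real.log (p a b c) + Real.log (pc c)
              - Real.log (pac a c) - Real.log (pbc b c))) / Real.log 2 := by
            gcongr
        _ = p a b c * (Real.logb 2 (p a b c) + Real.logb 2 (pc c)
              - Real.logb 2 (pac a c) - Real.logb 2 (pbc b c)) := by
            simp only [Real.logb]
            ring
  have hsum1 : ∑ a, ∑ b, ∑ c, p a b c = 1 := by
    have h := sum_pr μ hμ (fun ω => (A ω, B ω, C ω))
    rw [Fintype.sum_prod_type] at h
    simp only [Fintype.sum_prod_type] at h
    exact h
  have hsum2 : ∑ c, pc c = 1 := sum_pr μ hμ C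
  have hc : ∀ c, ∑ a, ∑ b, pac a c * pbc b c / pc c ≤ pc c := by
    intro c
    have e1 : ∑ a, ∑ b, pac a c * pbc b c / pc c
        = (∑ a, pac a c) * (∑ b, pbc b c) / pc c := by
      rw [Finset.sum_mul, Finset.sum_div]
      exact Finset.sum_congr rfl fun a _ => by rw [← Finset.sum_div, ← Finset.mul_sum]
    have e2 : ∑ a, pac a c = pc c := (marg_C_left μ A C c).symm
    have e3 : ∑ b, pbc b c = pc c := (marg_C_left μ B C c).symm
    rw [e1, e2, e3]
    rcases eq_or_lt_of_le (pr_nonneg μ hμ C c) with h0 | hpos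
    · have hz : pc c = 0 := h0.symm
      rw [hz]; simp
    · rw [mul_div_assoc, div_self (ne_of_gt hpos), mul_one]
  have hD : ∑ a, ∑ b, ∑ c, pac a c * pbc b c / pc c ≤ 1 := by
    have hre : ∑ a, ∑ b, ∑ c, pac a c * pbc b c / pc c
        = ∑ c, ∑ a, ∑ b, pac a c * pbc b c / pc c := by
      have h1 : ∀ a : α, ∑ b, ∑ c, pac a c * pbc b c / pc c
          = ∑ c, ∑ b, pac a c * pbc b c / pc c := fun a => Finset.sum_comm
      simp only [h1]
      exact Finset.sum_comm
    rw [hre, ← hsum2]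
    exact Finset.sum_le_sum fun c _ => hc c
  have hbound : 0 ≤ (∑ a, ∑ b, ∑ c, (p a b c - pac a c * pbc b c / pc c)) / Real.log 2 := by
    apply div_nonneg _ (le_of_lt hlog2)
    simp only [Finset.sum_sub_distrib]
    rw [hsum1]
    linarith [hD]
  refine le_trans hbound ?_
  rw [Finset.sum_div]
  refine Finset.sum_le_sum fun a _ => ?_
  rw [Finset.sum_div]
  refine Finset.sum_le_sum fun b _ => ?_
  rw [Finset.sum_div]
  exact Finset.sum_le_sum fun c _ => key a b c

lemma ci_marg {β' : Type*} [Fintype β'] (h : β → β')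
    (hci : ∀ a b c, pr μ (fun ω => (A ω, B ω, C ω)) (a, b, c) * pr μ C c
        = pr μ (fun ω => (A ω, C ω)) (a, c) * pr μ (fun ω => (B ω, C ω)) (b, c)) :
    ∀ a b' c, pr μ (fun ω => (A ω, h (B ω), C ω)) (a, b', c) * pr μ C c
      = pr μ (fun ω => (A ω, C ω)) (a, c)
        * pr μ (fun ω => (h (B ω), C ω)) (b', c) := by
  intro a b' c
  have e1 : pr μ (fun ω => (A ω, h (B ω), C ω)) (a, b', c)
      = ∑ x : α × β × γ, if (x.1, h x.2.1, x.2.2) = (a, b', c)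
          then pr μ (fun ω => (A ω, B ω, C ω)) x else 0 := by
    have h0 := pr_comp μ (fun ω => (A ω, B ω, C ω)) (fun x => (x.1, h x.2.1, x.2.2)) (a, b', c)
    convert h0 using 2
    congr
  have e2 : pr μ (fun ω => (h (B ω), C ω)) (b', c)
      = ∑ y : β × γ, if (h y.1, y.2) = (b', c)
          then pr μ (fun ω => (B ω, C ω)) y else 0 := by
    have h0 := pr_comp μ (fun ω => (B ω, C ω)) (fun y => (h y.1, y.2)) (b', c)
    convert h0 using 2
    congr
  rw [e1, e2, Finset.sum_mul, Finset.mul_sum]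
  rw [Fintype.sum_prod_type]
  rw [Finset.sum_eq_single a]
  · refine Finset.sum_congr rfl fun y _ => ?_
    by_cases hcond : (h y.1, y.2) = (b', c)
    · have hy2 : y.2 = c := (Prod.mk.injEq _ _ _ _ ▸ hcond).2
      have hcond' : ((a, h y.1, y.2) : α × β' × γ) = (a, b', c) := by
        simp [Prod.ext_iff] at hcond ⊢; exact hcond
      rw [if_pos hcond', if_pos hcond]
      have := hci a y.1 y.2
      rw [hy2] at this
      calc pr μ (fun ω => (A ω, B ω, C ω)) (a, y.1, y.2) * pr μ C c
          = pr μ (fun ω => (A ω, B ω, C ω)) (a, y.1, c) * pr μ C c := by rw [hy2]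
        _ = pr μ (fun ω => (A ω, C ω)) (a, c) * pr μ (fun ω => (B ω, C ω)) (y.1, c) := by
            have h2 := hci a y.1 c
            exact h2
        _ = pr μ (fun ω => (A ω, C ω)) (a, c) * pr μ (fun ω => (B ω, C ω)) y := by rw [← hy2]
    · have hcond' : ¬ ((a, h y.1, y.2) : α × β' × γ) = (a, b', c) := by
        simp [Prod.ext_iff] at hcond ⊢; exact hcond
      rw [if_neg hcond', if_neg hcond, zero_mul, mul_zero]
  · intro a' _ ha'
    refine Finset.sum_eq_zero fun y _ => ?_
    have : ¬ ((a', h y.1, y.2) : α × β' × γ) = (a, b', c) := by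
      simp [Prod.ext_iff]; intro h1; exact absurd h1 ha'
    rw [if_neg this, zero_mul]
  · simp
end CMI

end

/-- If `V–U–X–(Y,Z)` is a Markov chain (i.e. `V ⊥ (X,Y,Z) | U` and
`(V,U) ⊥ (Y,Z) | X`), `Y = f(X)` and `X = g(Y,U)`, then
`I(V;Y) + H(Y|U) + I(U;Z|V) ≤ I(X;Y,Z)`. -/
theorem stmt12 {Ω τv τu τx τy τz : Type*} [Fintype Ω]
    [Fintype τv] [Fintype τu] [Fintype τx] [Fintype τy] [Fintype τz]
    (μ : Ω → ℝ) (hμ : IsPMF μ)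
    (V : Ω → τv) (U : Ω → τu) (X : Ω → τx) (Y : Ω → τy) (Z : Ω → τz)
    (f : τx → τy) (hf : ∀ ω, Y ω = f (X ω))
    (g : τy → τu → τx) (hg : ∀ ω, X ω = g (Y ω) (U ω))
    (hMarkov1 : ∀ v xyz u,
      pr μ (fun ω => (V ω, (X ω, Y ω, Z ω), U ω)) (v, xyz, u) * pr μ U u
        = pr μ (fun ω => (V ω, U ω)) (v, u)
          * pr μ (fun ω => ((X ω, Y ω, Z ω), U ω)) (xyz, u))
    (hMarkov2 : ∀ vu yz x,
      pr μ (fun ω => ((V ω, U ω), (Y ω, Z ω), X ω)) (vu, yz, x) * pr μ X x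
        = pr μ (fun ω => ((V ω, U ω), X ω)) (vu, x)
          * pr μ (fun ω => ((Y ω, Z ω), X ω)) (yz, x)) :
    mi μ V Y + cent μ Y U + cmi μ U Z V ≤ mi μ X (fun ω => (Y ω, Z ω)) := by
  have hci1 := ci_marg μ V (fun ω => (X ω, Y ω, Z ω)) U
    (fun p => p.2.1) hMarkov1
  have Z1 : cmi μ V Y U = 0 := cmi_eq_zero μ V Y U hμ hci1
  have hci2 := ci_marg μ (fun ω => (V ω, U ω)) (fun ω => (Y ω, Z ω)) X
    (fun p => p.2) hMarkov2
  have Z2 : cmi μ (fun ω => (V ω, U ω)) Z X = 0 := cmi_eq_zero μ _ Z X hμ hci2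
  have N1 : 0 ≤ cmi μ U Y (fun ω => (V ω, Z ω)) := cmi_nonneg μ U Y _ hμ
  have N2 : 0 ≤ cmi μ V Z Y := cmi_nonneg μ V Z Y hμ
  have A1 : ent μ (fun ω => (U ω, V ω)) = ent μ (fun ω => (V ω, U ω)) :=
    ent_comp μ (fun ω => (V ω, U ω)) (e := fun p => (p.2, p.1))
      (by rintro ⟨a1,a2⟩ ⟨b1,b2⟩ h; simp only [Prod.mk.injEq] at h ⊢; tauto)
  have A2 : ent μ (fun ω => (Z ω, V ω)) = ent μ (fun ω => (V ω, Z ω)) :=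
    ent_comp μ (fun ω => (V ω, Z ω)) (e := fun p => (p.2, p.1))
      (by rintro ⟨a1,a2⟩ ⟨b1,b2⟩ h; simp only [Prod.mk.injEq] at h ⊢; tauto)
  have A3 : ent μ (fun ω => (U ω, Z ω, V ω)) = ent μ (fun ω => (U ω, V ω, Z ω)) :=
    ent_comp μ (fun ω => (U ω, V ω, Z ω)) (e := fun p => (p.1, p.2.2, p.2.1))
      (by rintro ⟨a1,a2,a3⟩ ⟨b1,b2,b3⟩ h; simp only [Prod.mk.injEq] at h ⊢; tauto)
  have A4 : ent μ (fun ω => (X ω, Y ω, Z ω)) = ent μ (fun ω => (Z ω, X ω)) := by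
    have hfun : (fun ω => (X ω, Y ω, Z ω))
        = fun ω => (fun p : τz × τx => (p.2, f p.2, p.1)) ((fun ω => (Z ω, X ω)) ω) := by
      funext ω; simp only [hf ω]
    rw [hfun]
    exact ent_comp μ (fun ω => (Z ω, X ω)) (e := fun p : τz × τx => (p.2, f p.2, p.1))
      (by rintro ⟨a1,a2⟩ ⟨b1,b2⟩ h; simp only [Prod.mk.injEq] at h ⊢; tauto)
  have A5 : ent μ (fun ω => ((V ω, U ω), X ω)) = ent μ (fun ω => (V ω, Y ω, U ω)) := by
    have s1 : ent μ (fun ω => (V ω, Y ω, U ω, X ω))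
        = ent μ (fun ω => ((V ω, U ω), X ω)) := by
      have hfun : (fun ω => (V ω, Y ω, U ω, X ω))
          = fun ω => (fun q : (τv × τu) × τx => (q.1.1, f q.2, q.1.2, q.2))
              ((fun ω => ((V ω, U ω), X ω)) ω) := by
        funext ω; simp only [hf ω]
      rw [hfun]
      exact ent_comp μ (fun ω => ((V ω, U ω), X ω))
        (e := fun q : (τv × τu) × τx => (q.1.1, f q.2, q.1.2, q.2))
        (by rintro ⟨⟨a1,a2⟩,a3⟩ ⟨⟨b1,b2⟩,b3⟩ h; simp only [Prod.mk.injEq] at h ⊢; tauto)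
    have s2 : ent μ (fun ω => (V ω, Y ω, U ω, X ω))
        = ent μ (fun ω => (V ω, Y ω, U ω)) := by
      have hfun : (fun ω => (V ω, Y ω, U ω, X ω))
          = fun ω => (fun q : τv × τy × τu => (q.1, q.2.1, q.2.2, g q.2.1 q.2.2))
              ((fun ω => (V ω, Y ω, U ω)) ω) := by
        funext ω; simp only [hg ω]
      rw [hfun]
      exact ent_comp μ (fun ω => (V ω, Y ω, U ω))
        (e := fun q : τv × τy × τu => (q.1, q.2.1, q.2.2, g q.2.1 q.2.2))
        (by rintro ⟨a1,a2,a3⟩ ⟨b1,b2,b3⟩ h; simp only [Prod.mk.injEq] at h ⊢; exact ⟨h.1, h.2.1, h.2.2.1⟩)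
    rw [← s1, s2]
  have A6 : ent μ (fun ω => ((V ω, U ω), Z ω, X ω))
      = ent μ (fun ω => (U ω, Y ω, V ω, Z ω)) := by
    have s1 : ent μ (fun ω => (V ω, U ω, X ω, Y ω, Z ω))
        = ent μ (fun ω => ((V ω, U ω), Z ω, X ω)) := by
      have hfun : (fun ω => (V ω, U ω, X ω, Y ω, Z ω))
          = fun ω => (fun q : (τv × τu) × τz × τx =>
              (q.1.1, q.1.2, q.2.2, f q.2.2, q.2.1))
              ((fun ω => ((V ω, U ω), Z ω, X ω)) ω) := by
        funext ω; simp only [hf ω]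
      rw [hfun]
      exact ent_comp μ (fun ω => ((V ω, U ω), Z ω, X ω))
        (e := fun q : (τv × τu) × τz × τx => (q.1.1, q.1.2, q.2.2, f q.2.2, q.2.1))
        (by rintro ⟨⟨a1,a2⟩,a3,a4⟩ ⟨⟨b1,b2⟩,b3,b4⟩ h; simp only [Prod.mk.injEq] at h ⊢; tauto)
    have s2 : ent μ (fun ω => (V ω, U ω, X ω, Y ω, Z ω))
        = ent μ (fun ω => (U ω, Y ω, V ω, Z ω)) := by
      have hfun : (fun ω => (V ω, U ω, X ω, Y ω, Z ω))
          = fun ω => (fun q : τu × τy × τv × τz =>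
              (q.2.2.1, q.1, g q.2.1 q.1, q.2.1, q.2.2.2))
              ((fun ω => (U ω, Y ω, V ω, Z ω)) ω) := by
        funext ω; simp only [hg ω]
      rw [hfun]
      exact ent_comp μ (fun ω => (U ω, Y ω, V ω, Z ω))
        (e := fun q : τu × τy × τv × τz => (q.2.2.1, q.1, g q.2.1 q.1, q.2.1, q.2.2.2))
        (by rintro ⟨a1,a2,a3,a4⟩ ⟨b1,b2,b3,b4⟩ h; simp only [Prod.mk.injEq] at h ⊢; exact ⟨h.2.1, h.2.2.2.1, h.1, h.2.2.2.2⟩)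
    rw [← s1, s2]
  have A7 : ent μ (fun ω => (Y ω, V ω, Z ω)) = ent μ (fun ω => (V ω, Z ω, Y ω)) :=
    ent_comp μ (fun ω => (V ω, Z ω, Y ω)) (e := fun p => (p.2.2, p.1, p.2.1))
      (by rintro ⟨a1,a2,a3⟩ ⟨b1,b2,b3⟩ h; simp only [Prod.mk.injEq] at h ⊢; tauto)
  have A8 : ent μ (fun ω => (Z ω, Y ω)) = ent μ (fun ω => (Y ω, Z ω)) :=
    ent_comp μ (fun ω => (Y ω, Z ω)) (e := fun p => (p.2, p.1))
      (by rintro ⟨a1,a2⟩ ⟨b1,b2⟩ h; simp only [Prod.mk.injEq] at h ⊢; tauto)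
  simp only [mi, cent, cmi] at Z1 Z2 N1 N2 ⊢
  linarith [Z1, Z2, N1, N2, A1, A2, A3, A4, A5, A6, A7, A8]
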